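/- For X = √(g₂^{-1}g₁) with g_i = I + ε h_i in dimension 4, the invariant e₃(X) = (1/6)((Tr X)³ - 3 Tr(X)Tr(X²) + 2 Tr(X³)) satisfies e₃(X) = 4 + (3ε/2) Tr(h₁ - h₂) + (ε²/8)[-5 Tr(h₁²) - 2 Tr(h₁h₂) + 7 Tr(h₂²) + 2 (Tr h₁)² + 2 (Tr h₂)² - 4 Tr(h₁)Tr(h₂)] + O(ε³). -/

import Mathlib

open Asymptotics Filter Matrix

/-- The generalized binomial coefficient `C(1/2, k)`. -/
noncomputable def halfChoose (k : ℕ) : ℝ :=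
  (∏ i ∈ Finset.range k, ((1 : ℝ) / 2 - i)) / (k.factorial : ℝ)

lemma halfChoose_zero : halfChoose 0 = 1 := by simp [halfChoose]

lemma halfChoose_one : halfChoose 1 = 1/2 := by
  simp [halfChoose]

lemma halfChoose_two : halfChoose 2 = -(1/8) := by
  simp [halfChoose, Finset.prod_range_succ]
  norm_num

lemma halfChoose_succ (k : ℕ) :
    halfChoose (k+1) = halfChoose k * ((1/2 - k)/(k+1)) := by
  simp only [halfChoose, Finset.prod_range_succ, Nat.factorial_succ]
  push_cast
  rw [div_mul_div_comm]
  rw [mul_comm ((k:ℝ) + 1)]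

lemma abs_halfChoose_le (k : ℕ) : |halfChoose k| ≤ 1 := by
  induction k with
  | zero => simp [halfChoose_zero]
  | succ k ih =>
    rw [halfChoose_succ, abs_mul, abs_div]
    have h1 : |(1:ℝ)/2 - k| ≤ |(k:ℝ) + 1| := by
      rw [abs_of_nonneg (by positivity : (0:ℝ) ≤ (k:ℝ)+1), abs_le]
      constructor <;> [linarith [Nat.cast_nonneg (α := ℝ) k]; linarith [Nat.cast_nonneg (α := ℝ) k]]
    have h2 : (0:ℝ) < |(k:ℝ) + 1| := by positivity
    calc |halfChoose k| * (|(1:ℝ)/2 - k| / |(k:ℝ)+1|) ≤ 1 * 1 := by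
          apply mul_le_mul ih _ (by positivity) zero_le_one
          rw [div_le_one h2]; exact h1
      _ = 1 := one_mul 1

attribute [local instance] Matrix.linftyOpNormedRing Matrix.linftyOpNormedAlgebra

/-- The principal square root of a matrix close to `1`, defined by the binomial
series `√M = ∑_{k≥0} C(1/2,k) (M-1)^k`. -/
noncomputable def matSqrt {n : ℕ} (M : Matrix (Fin n) (Fin n) ℝ) :
    Matrix (Fin n) (Fin n) ℝ :=
  ∑' k : ℕ, halfChoose k • (M - 1) ^ k

namespace E3Aux

abbrev Mat := Matrix (Fin 4) (Fin 4) ℝ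

example : CompleteSpace Mat := by infer_instance
example : NormOneClass Mat := by infer_instance

lemma term_norm_le (Δ : Mat) (k : ℕ) : ‖halfChoose k • Δ ^ k‖ ≤ ‖Δ‖ ^ k := by
  rw [norm_smul]
  rcases Nat.eq_zero_or_pos k with hk | hk
  · subst hk; simp [halfChoose_zero]
  · refine le_trans (mul_le_mul (abs_halfChoose_le k) (norm_pow_le' Δ hk)
      (norm_nonneg _) zero_le_one) (by rw [one_mul])

lemma summable_sqrt_series (Δ : Mat) (hΔ : ‖Δ‖ ≤ 1/2) :
    Summable (fun k => halfChoose k • Δ ^ k) := by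
  apply Summable.of_norm_bounded (g := fun k => (1/2 : ℝ) ^ k)
    (summable_geometric_of_lt_one (by norm_num) (by norm_num))
  intro k
  exact (term_norm_le Δ k).trans (pow_le_pow_left₀ (norm_nonneg _) hΔ k)

lemma matSqrt_approx (Δ : Mat) (hΔ : ‖Δ‖ ≤ 1/2) :
    ‖matSqrt (1 + Δ) - (1 + (2:ℝ)⁻¹ • Δ - (8:ℝ)⁻¹ • (Δ*Δ))‖ ≤ 2 * ‖Δ‖^3 := by
  have hd : (1 + Δ : Mat) - 1 = Δ := add_sub_cancel_left 1 Δ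
  have hΔ1 : ‖Δ‖ < 1 := lt_of_le_of_lt hΔ (by norm_num)
  have hsum := summable_sqrt_series Δ hΔ
  have hsplit := Summable.sum_add_tsum_nat_add 3 hsum
  have hgeom : Summable (fun k => ‖Δ‖ ^ k) :=
    summable_geometric_of_lt_one (norm_nonneg _) hΔ1
  have hnsum : Summable (fun k => ‖Δ‖ ^ (k+3)) := (summable_nat_add_iff 3).2 hgeom
  have htailsum : Summable (fun k => ‖halfChoose (k+3) • Δ ^ (k+3)‖) :=
    Summable.of_nonneg_of_le (fun _ => norm_nonneg _) (fun k => term_norm_le Δ _) hnsum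
  have hhead : ∑ i ∈ Finset.range 3, halfChoose i • Δ ^ i
      = 1 + (2:ℝ)⁻¹ • Δ - (8:ℝ)⁻¹ • (Δ*Δ) := by
    rw [Finset.sum_range_succ, Finset.sum_range_succ, Finset.sum_range_one]
    rw [halfChoose_zero, halfChoose_one, halfChoose_two]
    simp [pow_two]
    rw [← sub_eq_add_neg]
  have heq : matSqrt (1 + Δ) - (1 + (2:ℝ)⁻¹ • Δ - (8:ℝ)⁻¹ • (Δ*Δ))
      = ∑' k, halfChoose (k+3) • Δ ^ (k+3) := by
    rw [matSqrt, hd, ← hsplit, hhead]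
    abel
  rw [heq]
  have hinv : (1 - ‖Δ‖)⁻¹ ≤ 2 := by
    have h2 : (1:ℝ)/2 ≤ 1 - ‖Δ‖ := by linarith
    calc (1 - ‖Δ‖)⁻¹ ≤ ((1:ℝ)/2)⁻¹ := by
          apply inv_anti₀ (by norm_num) h2
      _ = 2 := by norm_num
  calc ‖∑' k, halfChoose (k+3) • Δ ^ (k+3)‖
      ≤ ∑' k, ‖halfChoose (k+3) • Δ ^ (k+3)‖ := norm_tsum_le_tsum_norm htailsum
    _ ≤ ∑' k, ‖Δ‖ ^ (k+3) := Summable.tsum_le_tsum (fun k => term_norm_le Δ _) htailsum hnsum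
    _ = ‖Δ‖^3 * ∑' k, ‖Δ‖ ^ k := by
        simp_rw [pow_add, mul_comm (‖Δ‖ ^ _) (‖Δ‖ ^ 3)]
        exact tsum_mul_left
    _ = ‖Δ‖^3 * (1 - ‖Δ‖)⁻¹ := by rw [tsum_geometric_of_lt_one (norm_nonneg _) hΔ1]
    _ ≤ ‖Δ‖^3 * 2 := by
        apply mul_le_mul_of_nonneg_left hinv (by positivity)
    _ = 2 * ‖Δ‖^3 := mul_comm _ _

lemma M_expand (h₁ h₂ : Mat) (ε : ℝ) (hε : |ε| * ‖h₂‖ ≤ 1/2) :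
    ∃ R : Mat, ‖R‖ ≤ 2
      ∧ (1 + ε • h₂)⁻¹ * (1 + ε • h₁) - 1 = ε • (R * (h₁ - h₂))
      ∧ (1 + ε • h₂)⁻¹ * (1 + ε • h₁) - 1 - ε • (h₁ - h₂) - ε^2 • (h₂*h₂ - h₂*h₁)
          = ε^3 • (h₂ * (h₂ * (R * (h₁ - h₂)))) := by
  have ht : ‖-(ε • h₂)‖ < 1 := by
    rw [norm_neg, norm_smul, Real.norm_eq_abs]
    linarith
  set u : Matˣ := Units.oneSub (-(ε • h₂)) ht with hu
  have hval : (u : Mat) = 1 + ε • h₂ := by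
    rw [hu, Units.val_oneSub, sub_neg_eq_add]
  set R : Mat := ↑u⁻¹ with hRdef
  have hmul : (1 + ε • h₂) * R = 1 := by rw [← hval]; exact u.mul_inv
  have hmul' : R * (1 + ε • h₂) = 1 := by rw [← hval]; exact u.inv_mul
  have hinv : (1 + ε • h₂)⁻¹ = R := Matrix.inv_eq_right_inv hmul
  have hR : R = 1 - ε • (h₂ * R) := by
    have h := hmul
    rw [add_mul, one_mul, smul_mul_assoc] at h
    rw [eq_sub_iff_add_eq]
    exact h
  have hRn : ‖R‖ ≤ 2 := by
    have h1 : ‖R‖ ≤ 1 + |ε| * (‖h₂‖ * ‖R‖) := by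
      calc ‖R‖ = ‖(1 : Mat) - ε • (h₂ * R)‖ := by rw [← hR]
        _ ≤ ‖(1 : Mat)‖ + ‖ε • (h₂ * R)‖ := norm_sub_le _ _
        _ ≤ 1 + |ε| * (‖h₂‖ * ‖R‖) := by
            rw [norm_one, norm_smul, Real.norm_eq_abs]
            gcongr
            exact norm_mul_le _ _
    nlinarith [norm_nonneg R, abs_nonneg ε, norm_nonneg h₂,
      mul_le_mul_of_nonneg_right hε (norm_nonneg R)]
  have hM : (1 + ε • h₂)⁻¹ * (1 + ε • h₁) - 1 = ε • (R * (h₁ - h₂)) := by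
    have hms : R * (1 + ε • h₁) - 1 = R * ((1 + ε • h₁) - (1 + ε • h₂)) := by
      rw [mul_sub, hmul']
    rw [hinv, hms, add_sub_add_left_eq_sub, ← smul_sub, mul_smul_comm]
  refine ⟨R, hRn, hM, ?_⟩
  have e1 : R * (h₁ - h₂) = (h₁ - h₂) - ε • ((h₂ * R) * (h₁ - h₂)) := by
    conv_lhs => rw [hR]
    rw [sub_mul, one_mul, smul_mul_assoc]
  have e2 : h₂ * R = h₂ - ε • (h₂ * (h₂ * R)) := by
    conv_lhs => rw [hR]
    rw [mul_sub, mul_one, mul_smul_comm]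
  rw [hM]
  conv_lhs => rw [e1]
  conv_lhs => rw [e2]
  simp only [sub_mul, mul_sub, smul_mul_assoc, mul_smul_comm, smul_sub, smul_smul, mul_assoc]
  module

lemma S_sq (Δ : Mat) :
    (1 + (2:ℝ)⁻¹ • Δ - (8:ℝ)⁻¹ • (Δ*Δ)) * (1 + (2:ℝ)⁻¹ • Δ - (8:ℝ)⁻¹ • (Δ*Δ))
      = 1 + Δ - (8:ℝ)⁻¹ • (Δ*(Δ*Δ)) + (64:ℝ)⁻¹ • (Δ*(Δ*(Δ*Δ))) := by
  simp only [sub_mul, mul_sub, add_mul, mul_add, smul_mul_assoc, mul_smul_comm,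
    smul_smul, mul_assoc, one_mul, mul_one]
  module

lemma S_cube (Δ : Mat) :
    (1 + (2:ℝ)⁻¹ • Δ - (8:ℝ)⁻¹ • (Δ*Δ)) *
      ((1 + (2:ℝ)⁻¹ • Δ - (8:ℝ)⁻¹ • (Δ*Δ)) * (1 + (2:ℝ)⁻¹ • Δ - (8:ℝ)⁻¹ • (Δ*Δ)))
      = 1 + (3/2 : ℝ) • Δ + (3/8 : ℝ) • (Δ*Δ) - (4:ℝ)⁻¹ • (Δ*(Δ*Δ))
        - (3/64 : ℝ) • (Δ*(Δ*(Δ*Δ))) + (3/128 : ℝ) • (Δ*(Δ*(Δ*(Δ*Δ))))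
        - (512:ℝ)⁻¹ • (Δ*(Δ*(Δ*(Δ*(Δ*Δ))))) := by
  simp only [sub_mul, mul_sub, add_mul, mul_add, smul_mul_assoc, mul_smul_comm,
    smul_smul, mul_assoc, one_mul, mul_one]
  module

lemma traceO {l : Filter ℝ} {f : ℝ → Mat} {g : ℝ → ℝ} (h : f =O[l] g) :
    (fun ε => (f ε).trace) =O[l] g :=
  (((Matrix.traceLinearMap (Fin 4) ℝ ℝ).toContinuousLinearMap).isBigO_comp f l).trans h

lemma pow_isBigO {m k : ℕ} (h : k ≤ m) :
    (fun ε : ℝ => ε ^ m) =O[nhds 0] (fun ε => ε ^ k) := by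
  have he : (fun ε : ℝ => ε ^ m) = fun ε => ε ^ k * ε ^ (m - k) := by
    funext ε; rw [← pow_add]; congr 1; omega
  rw [he]
  have h2 : (fun ε : ℝ => ε ^ (m - k)) =O[nhds 0] (fun _ => (1:ℝ)) :=
    ((continuous_pow (m-k)).tendsto 0).isBigO_one ℝ
  have := (isBigO_refl (fun ε : ℝ => ε ^ k) (nhds 0)).mul h2
  simpa using this

lemma smul_const_isBigO (k : ℕ) (c : Mat) :
    (fun ε : ℝ => ε ^ k • c) =O[nhds 0] (fun ε => ε ^ k) := by
  refine isBigO_iff.2 ⟨‖c‖, Filter.Eventually.of_forall fun ε => ?_⟩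
  rw [norm_smul, Real.norm_eq_abs]
  exact le_of_eq (mul_comm _ _)

noncomputable def DD (h₁ h₂ : Mat) (ε : ℝ) : Mat := (1 + ε • h₂)⁻¹ * (1 + ε • h₁) - 1
noncomputable def XX (h₁ h₂ : Mat) (ε : ℝ) : Mat := matSqrt ((1 + ε • h₂)⁻¹ * (1 + ε • h₁))
noncomputable def SS (h₁ h₂ : Mat) (ε : ℝ) : Mat :=
  1 + (2:ℝ)⁻¹ • DD h₁ h₂ ε - (8:ℝ)⁻¹ • (DD h₁ h₂ ε * DD h₁ h₂ ε)

variable (h₁ h₂ : Mat)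

lemma hev : ∀ᶠ ε : ℝ in nhds 0, |ε| * ‖h₂‖ ≤ 1/2 := by
  have hcont : Continuous fun ε : ℝ => |ε| * ‖h₂‖ := by continuity
  have h0 : Tendsto (fun ε : ℝ => |ε| * ‖h₂‖) (nhds 0) (nhds 0) := by
    have := hcont.tendsto 0
    simpa using this
  exact h0.eventually (eventually_le_nhds (by norm_num))

lemma bigO_D3 : (fun ε => DD h₁ h₂ ε - ε • (h₁ - h₂) - ε^2 • (h₂*h₂ - h₂*h₁))
    =O[nhds 0] (fun ε => ε^3) := by
  rw [isBigO_iff]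
  refine ⟨‖h₂‖ * (‖h₂‖ * (2 * ‖h₁ - h₂‖)), (hev h₂).mono fun ε hε => ?_⟩
  obtain ⟨R, hRn, _, hE⟩ := M_expand h₁ h₂ ε hε
  rw [DD, hE, norm_smul, Real.norm_eq_abs]
  have i1 : ‖R * (h₁ - h₂)‖ ≤ 2 * ‖h₁ - h₂‖ :=
    (norm_mul_le _ _).trans (mul_le_mul_of_nonneg_right hRn (norm_nonneg _))
  have i2 : ‖h₂ * (R * (h₁ - h₂))‖ ≤ ‖h₂‖ * (2 * ‖h₁ - h₂‖) :=
    (norm_mul_le _ _).trans (mul_le_mul_of_nonneg_left i1 (norm_nonneg _))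
  have i3 : ‖h₂ * (h₂ * (R * (h₁ - h₂)))‖ ≤ ‖h₂‖ * (‖h₂‖ * (2 * ‖h₁ - h₂‖)) :=
    (norm_mul_le _ _).trans (mul_le_mul_of_nonneg_left i2 (norm_nonneg _))
  calc |ε^3| * ‖h₂ * (h₂ * (R * (h₁ - h₂)))‖
      ≤ |ε^3| * (‖h₂‖ * (‖h₂‖ * (2 * ‖h₁ - h₂‖))) :=
        mul_le_mul_of_nonneg_left i3 (abs_nonneg _)
    _ = ‖h₂‖ * (‖h₂‖ * (2 * ‖h₁ - h₂‖)) * ‖ε^3‖ := by rw [Real.norm_eq_abs]; ring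

lemma bigO_D1 : (fun ε => DD h₁ h₂ ε) =O[nhds 0] (fun ε => ε) := by
  rw [isBigO_iff]
  refine ⟨2 * ‖h₁ - h₂‖, (hev h₂).mono fun ε hε => ?_⟩
  obtain ⟨R, hRn, hM, _⟩ := M_expand h₁ h₂ ε hε
  rw [DD, hM, norm_smul, Real.norm_eq_abs]
  have i1 : ‖R * (h₁ - h₂)‖ ≤ 2 * ‖h₁ - h₂‖ :=
    (norm_mul_le _ _).trans (mul_le_mul_of_nonneg_right hRn (norm_nonneg _))
  calc |ε| * ‖R * (h₁ - h₂)‖ ≤ |ε| * (2 * ‖h₁ - h₂‖) :=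
        mul_le_mul_of_nonneg_left i1 (abs_nonneg _)
    _ = 2 * ‖h₁ - h₂‖ * ‖ε‖ := by rw [Real.norm_eq_abs]; ring

lemma bigO_D2 : (fun ε => DD h₁ h₂ ε - ε • (h₁ - h₂)) =O[nhds 0] (fun ε => ε^2) := by
  have h1 : (fun ε : ℝ => DD h₁ h₂ ε - ε • (h₁ - h₂) - ε^2 • (h₂*h₂ - h₂*h₁))
      =O[nhds 0] (fun ε => ε^2) := (bigO_D3 h₁ h₂).trans (pow_isBigO (by norm_num))
  have h2 := h1.add (smul_const_isBigO 2 (h₂*h₂ - h₂*h₁))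
  refine h2.congr_left fun ε => ?_
  abel

lemma bigO_Dsq : (fun ε => DD h₁ h₂ ε * DD h₁ h₂ ε - ε^2 • ((h₁-h₂)*(h₁-h₂)))
    =O[nhds 0] (fun ε => ε^3) := by
  have key : ∀ ε : ℝ, DD h₁ h₂ ε * DD h₁ h₂ ε - ε^2 • ((h₁-h₂)*(h₁-h₂))
      = (DD h₁ h₂ ε - ε • (h₁-h₂)) * DD h₁ h₂ ε
        + (ε • (h₁-h₂)) * (DD h₁ h₂ ε - ε • (h₁-h₂)) := by
    intro ε
    simp only [sub_mul, mul_sub, smul_mul_assoc, mul_smul_comm, smul_smul]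
    module
  have h1a := ((bigO_D2 h₁ h₂).mul (bigO_D1 h₁ h₂)).congr_right
    (fun ε : ℝ => by ring : ∀ ε : ℝ, ε^2*ε = ε^3)
  have h1b := ((smul_const_isBigO 1 (h₁ - h₂)).mul (bigO_D2 h₁ h₂)).congr_right
    (fun ε : ℝ => by ring : ∀ ε : ℝ, ε^1*ε^2 = ε^3)
  refine (h1a.add h1b).congr_left fun ε => ?_
  rw [pow_one, ← key ε]

lemma ev_D_small : ∀ᶠ ε : ℝ in nhds 0, ‖DD h₁ h₂ ε‖ ≤ 1/2 := by
  obtain ⟨c, hc⟩ := isBigO_iff.1 (bigO_D1 h₁ h₂)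
  have tend : Tendsto (fun ε : ℝ => c * ‖ε‖) (nhds 0) (nhds 0) := by
    have hcont : Continuous fun ε : ℝ => c * ‖ε‖ := by continuity
    simpa using hcont.tendsto 0
  filter_upwards [hc, tend.eventually (eventually_le_nhds (by norm_num : (0:ℝ) < 1/2))]
    with ε hb hs
  exact hb.trans hs

lemma bigO_XS : (fun ε => XX h₁ h₂ ε - SS h₁ h₂ ε) =O[nhds 0] (fun ε => ε^3) := by
  obtain ⟨c, hc⟩ := isBigO_iff.1 (bigO_D1 h₁ h₂)
  rw [isBigO_iff]
  refine ⟨2 * c^3, ?_⟩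
  filter_upwards [hc, ev_D_small h₁ h₂] with ε hb hs
  have hx : XX h₁ h₂ ε = matSqrt (1 + DD h₁ h₂ ε) := by
    rw [XX, DD, add_sub_cancel]
  rw [hx, SS]
  refine (matSqrt_approx _ hs).trans ?_
  have h3 : ‖DD h₁ h₂ ε‖^3 ≤ (c * ‖ε‖)^3 := pow_le_pow_left₀ (norm_nonneg _) hb 3
  calc 2 * ‖DD h₁ h₂ ε‖^3 ≤ 2 * (c * ‖ε‖)^3 := by linarith
    _ = 2 * c^3 * ‖ε^3‖ := by rw [norm_pow]; ring

lemma id_isBigO_one : (fun ε : ℝ => ε) =O[nhds 0] (fun _ => (1:ℝ)) :=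
  (continuous_id.tendsto 0).isBigO_one ℝ

lemma pow3_isBigO_one : (fun ε : ℝ => ε^3) =O[nhds 0] (fun _ => (1:ℝ)) :=
  ((continuous_pow 3).tendsto 0).isBigO_one ℝ

lemma bigO_D_one : (fun ε => DD h₁ h₂ ε) =O[nhds 0] (fun _ => (1:ℝ)) :=
  (bigO_D1 h₁ h₂).trans id_isBigO_one

lemma bigO_S_one : (fun ε => SS h₁ h₂ ε) =O[nhds 0] (fun _ => (1:ℝ)) := by
  have h1 : (fun _ : ℝ => (1 : Mat)) =O[nhds 0] (fun _ => (1:ℝ)) :=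
    isBigO_const_const _ one_ne_zero _
  have h2 := (bigO_D_one h₁ h₂).const_smul_left (2:ℝ)⁻¹
  have h3 := (((bigO_D_one h₁ h₂).mul (bigO_D_one h₁ h₂)).congr_right
    (fun _ : ℝ => one_mul 1)).const_smul_left (8:ℝ)⁻¹
  refine ((h1.add h2).sub h3).congr_left fun ε => ?_
  simp [SS]

lemma bigO_X_one : (fun ε => XX h₁ h₂ ε) =O[nhds 0] (fun _ => (1:ℝ)) := by
  have h1 := ((bigO_XS h₁ h₂).trans pow3_isBigO_one).add (bigO_S_one h₁ h₂)
  refine h1.congr_left fun ε => ?_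
  abel

noncomputable def P1 (h₁ h₂ : Mat) (ε : ℝ) : ℝ :=
  4 + (2:ℝ)⁻¹*(ε*(h₁-h₂).trace + ε^2*(h₂*h₂-h₂*h₁).trace)
    - (8:ℝ)⁻¹*(ε^2*((h₁-h₂)*(h₁-h₂)).trace)

noncomputable def P2 (h₁ h₂ : Mat) (ε : ℝ) : ℝ :=
  4 + (ε*(h₁-h₂).trace + ε^2*(h₂*h₂-h₂*h₁).trace)

noncomputable def P3 (h₁ h₂ : Mat) (ε : ℝ) : ℝ :=
  4 + (3/2)*(ε*(h₁-h₂).trace + ε^2*(h₂*h₂-h₂*h₁).trace)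
    + (3/8)*(ε^2*((h₁-h₂)*(h₁-h₂)).trace)

lemma tr_D3 : (fun ε => (DD h₁ h₂ ε).trace
    - (ε*(h₁-h₂).trace + ε^2*(h₂*h₂-h₂*h₁).trace)) =O[nhds 0] (fun ε => ε^3) := by
  refine (traceO (bigO_D3 h₁ h₂)).congr_left fun ε => ?_
  simp only [Matrix.trace_sub, Matrix.trace_smul, smul_eq_mul]
  ring

lemma tr_Dsq : (fun ε => (DD h₁ h₂ ε * DD h₁ h₂ ε).trace
    - ε^2*((h₁-h₂)*(h₁-h₂)).trace) =O[nhds 0] (fun ε => ε^3) := by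
  refine (traceO (bigO_Dsq h₁ h₂)).congr_left fun ε => ?_
  simp only [Matrix.trace_sub, Matrix.trace_smul, smul_eq_mul]

lemma bigO_D3prod : (fun ε => DD h₁ h₂ ε * (DD h₁ h₂ ε * DD h₁ h₂ ε))
    =O[nhds 0] (fun ε => ε^3) :=
  ((bigO_D1 h₁ h₂).mul ((bigO_D1 h₁ h₂).mul (bigO_D1 h₁ h₂))).congr_right
    fun ε => by ring

lemma bigO_D4prod : (fun ε => DD h₁ h₂ ε * (DD h₁ h₂ ε * (DD h₁ h₂ ε * DD h₁ h₂ ε)))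
    =O[nhds 0] (fun ε => ε^3) :=
  ((bigO_D_one h₁ h₂).mul (bigO_D3prod h₁ h₂)).congr_right fun ε => one_mul _

lemma bigO_D5prod : (fun ε => DD h₁ h₂ ε * (DD h₁ h₂ ε * (DD h₁ h₂ ε * (DD h₁ h₂ ε * DD h₁ h₂ ε))))
    =O[nhds 0] (fun ε => ε^3) :=
  ((bigO_D_one h₁ h₂).mul (bigO_D4prod h₁ h₂)).congr_right fun ε => one_mul _

lemma bigO_D6prod : (fun ε => DD h₁ h₂ ε * (DD h₁ h₂ ε * (DD h₁ h₂ ε * (DD h₁ h₂ ε * (DD h₁ h₂ ε * DD h₁ h₂ ε)))))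
    =O[nhds 0] (fun ε => ε^3) :=
  ((bigO_D_one h₁ h₂).mul (bigO_D5prod h₁ h₂)).congr_right fun ε => one_mul _

lemma trace_SS (ε : ℝ) : (SS h₁ h₂ ε).trace
    = 4 + (2:ℝ)⁻¹*(DD h₁ h₂ ε).trace - (8:ℝ)⁻¹*(DD h₁ h₂ ε * DD h₁ h₂ ε).trace := by
  simp [SS, Matrix.trace_add, Matrix.trace_sub, Matrix.trace_smul, Matrix.trace_one,
    smul_eq_mul]

lemma trace_SSsq (ε : ℝ) : (SS h₁ h₂ ε * SS h₁ h₂ ε).trace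
    = 4 + (DD h₁ h₂ ε).trace - (8:ℝ)⁻¹*(DD h₁ h₂ ε * (DD h₁ h₂ ε * DD h₁ h₂ ε)).trace
      + (64:ℝ)⁻¹*(DD h₁ h₂ ε * (DD h₁ h₂ ε * (DD h₁ h₂ ε * DD h₁ h₂ ε))).trace := by
  rw [SS, S_sq]
  simp [Matrix.trace_add, Matrix.trace_sub, Matrix.trace_smul, Matrix.trace_one,
    smul_eq_mul]

lemma trace_SScube (ε : ℝ) : (SS h₁ h₂ ε * (SS h₁ h₂ ε * SS h₁ h₂ ε)).trace
    = 4 + (3/2)*(DD h₁ h₂ ε).trace + (3/8)*(DD h₁ h₂ ε * DD h₁ h₂ ε).trace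
      - (4:ℝ)⁻¹*(DD h₁ h₂ ε * (DD h₁ h₂ ε * DD h₁ h₂ ε)).trace
      - (3/64)*(DD h₁ h₂ ε * (DD h₁ h₂ ε * (DD h₁ h₂ ε * DD h₁ h₂ ε))).trace
      + (3/128)*(DD h₁ h₂ ε * (DD h₁ h₂ ε * (DD h₁ h₂ ε * (DD h₁ h₂ ε * DD h₁ h₂ ε)))).trace
      - (512:ℝ)⁻¹*(DD h₁ h₂ ε * (DD h₁ h₂ ε * (DD h₁ h₂ ε * (DD h₁ h₂ ε * (DD h₁ h₂ ε * DD h₁ h₂ ε))))).trace := by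
  rw [SS, S_cube]
  simp [Matrix.trace_add, Matrix.trace_sub, Matrix.trace_smul, Matrix.trace_one,
    smul_eq_mul]
  try ring

lemma bigO_t1 : (fun ε => (XX h₁ h₂ ε).trace - P1 h₁ h₂ ε) =O[nhds 0] (fun ε => ε^3) := by
  have A1 : (fun ε => (XX h₁ h₂ ε).trace - (SS h₁ h₂ ε).trace) =O[nhds 0] (fun ε => ε^3) :=
    (traceO (bigO_XS h₁ h₂)).congr_left fun ε => by rw [Matrix.trace_sub]
  have comb := (A1.add ((tr_D3 h₁ h₂).const_mul_left (2:ℝ)⁻¹)).sub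
    ((tr_Dsq h₁ h₂).const_mul_left (8:ℝ)⁻¹)
  refine comb.congr_left fun ε => ?_
  rw [trace_SS]
  simp only [P1]
  ring

lemma bigO_XXsq : (fun ε => XX h₁ h₂ ε * XX h₁ h₂ ε - SS h₁ h₂ ε * SS h₁ h₂ ε)
    =O[nhds 0] (fun ε => ε^3) := by
  have h := (((bigO_XS h₁ h₂).mul (bigO_X_one h₁ h₂)).congr_right
      (fun ε : ℝ => mul_one _)).add
    (((bigO_S_one h₁ h₂).mul (bigO_XS h₁ h₂)).congr_right (fun ε : ℝ => one_mul _))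
  refine h.congr_left fun ε => ?_
  simp only [sub_mul, mul_sub]
  abel

lemma bigO_t2 : (fun ε => (XX h₁ h₂ ε * XX h₁ h₂ ε).trace - P2 h₁ h₂ ε)
    =O[nhds 0] (fun ε => ε^3) := by
  have A1 : (fun ε => (XX h₁ h₂ ε * XX h₁ h₂ ε).trace - (SS h₁ h₂ ε * SS h₁ h₂ ε).trace)
      =O[nhds 0] (fun ε => ε^3) :=
    (traceO (bigO_XXsq h₁ h₂)).congr_left fun ε => by rw [Matrix.trace_sub]
  have comb := ((A1.add (tr_D3 h₁ h₂)).sub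
      ((traceO (bigO_D3prod h₁ h₂)).const_mul_left (8:ℝ)⁻¹)).add
    ((traceO (bigO_D4prod h₁ h₂)).const_mul_left (64:ℝ)⁻¹)
  refine comb.congr_left fun ε => ?_
  rw [trace_SSsq]
  simp only [P2]
  ring

lemma bigO_XXcube : (fun ε => XX h₁ h₂ ε * (XX h₁ h₂ ε * XX h₁ h₂ ε)
    - SS h₁ h₂ ε * (SS h₁ h₂ ε * SS h₁ h₂ ε)) =O[nhds 0] (fun ε => ε^3) := by
  have b1 := ((bigO_XS h₁ h₂).mul (((bigO_X_one h₁ h₂).mul (bigO_X_one h₁ h₂)).congr_right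
    (fun ε : ℝ => one_mul _))).congr_right (fun ε : ℝ => mul_one _)
  have b2 := ((bigO_S_one h₁ h₂).mul (((bigO_XS h₁ h₂).mul (bigO_X_one h₁ h₂)).congr_right
    (fun ε : ℝ => mul_one _))).congr_right (fun ε : ℝ => one_mul _)
  have b3 := ((bigO_S_one h₁ h₂).mul (((bigO_S_one h₁ h₂).mul (bigO_XS h₁ h₂)).congr_right
    (fun ε : ℝ => one_mul _))).congr_right (fun ε : ℝ => one_mul _)
  refine ((b1.add b2).add b3).congr_left fun ε => ?_
  simp only [sub_mul, mul_sub]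
  abel

lemma bigO_t3 : (fun ε => (XX h₁ h₂ ε * (XX h₁ h₂ ε * XX h₁ h₂ ε)).trace - P3 h₁ h₂ ε)
    =O[nhds 0] (fun ε => ε^3) := by
  have A1 : (fun ε => (XX h₁ h₂ ε * (XX h₁ h₂ ε * XX h₁ h₂ ε)).trace
      - (SS h₁ h₂ ε * (SS h₁ h₂ ε * SS h₁ h₂ ε)).trace) =O[nhds 0] (fun ε => ε^3) :=
    (traceO (bigO_XXcube h₁ h₂)).congr_left fun ε => by rw [Matrix.trace_sub]
  have c1 := A1.add ((tr_D3 h₁ h₂).const_mul_left (3/2))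
  have c2 := c1.add ((tr_Dsq h₁ h₂).const_mul_left (3/8))
  have c3 := c2.sub ((traceO (bigO_D3prod h₁ h₂)).const_mul_left (4:ℝ)⁻¹)
  have c4 := c3.sub ((traceO (bigO_D4prod h₁ h₂)).const_mul_left (3/64))
  have c5 := c4.add ((traceO (bigO_D5prod h₁ h₂)).const_mul_left (3/128))
  have comb := c5.sub ((traceO (bigO_D6prod h₁ h₂)).const_mul_left (512:ℝ)⁻¹)
  refine comb.congr_left fun ε => ?_
  rw [trace_SScube]
  simp only [P3]
  ring

noncomputable def QQ (h₁ h₂ : Mat) (ε : ℝ) : ℝ :=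
  ((((-5)/16)*h₂.trace*(h₂^2).trace + ((1)/8)*h₂.trace*(h₁*h₂).trace + ((3)/16)*h₂.trace*(h₁^2).trace + ((-1)/48)*h₂.trace*h₂.trace*h₂.trace + ((5)/16)*h₁.trace*(h₂^2).trace + ((-1)/8)*h₁.trace*(h₁*h₂).trace + ((-3)/16)*h₁.trace*(h₁^2).trace + ((1)/16)*h₁.trace*h₂.trace*h₂.trace + ((-1)/16)*h₁.trace*h₁.trace*h₂.trace + ((1)/48)*h₁.trace*h₁.trace*h₁.trace) + ε*(((3)/32)*(h₂^2).trace*(h₂^2).trace + ((-1)/16)*(h₁*h₂).trace*(h₂^2).trace + ((-1)/8)*(h₁^2).trace*(h₂^2).trace + ((1)/16)*(h₁^2).trace*(h₁*h₂).trace + ((1)/32)*(h₁^2).trace*(h₁^2).trace + ((3)/64)*h₂.trace*h₂.trace*(h₂^2).trace + ((-1)/32)*h₂.trace*h₂.trace*(h₁*h₂).trace + ((-1)/64)*h₂.trace*h₂.trace*(h₁^2).trace + ((-3)/32)*h₁.trace*h₂.trace*(h₂^2).trace + ((1)/16)*h₁.trace*h₂.trace*(h₁*h₂).trace + ((1)/32)*h₁.trace*h₂.trace*(h₁^2).trace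 + ((3)/64)*h₁.trace*h₁.trace*(h₂^2).trace + ((-1)/32)*h₁.trace*h₁.trace*(h₁*h₂).trace + ((-1)/64)*h₁.trace*h₁.trace*(h₁^2).trace) + ε^2*(((-9)/256)*h₂.trace*(h₂^2).trace*(h₂^2).trace + ((3)/64)*h₂.trace*(h₁*h₂).trace*(h₂^2).trace + ((-1)/64)*h₂.trace*(h₁*h₂).trace*(h₁*h₂).trace + ((3)/128)*h₂.trace*(h₁^2).trace*(h₂^2).trace + ((-1)/64)*h₂.trace*(h₁^2).trace*(h₁*h₂).trace + ((-1)/256)*h₂.trace*(h₁^2).trace*(h₁^2).trace + ((9)/256)*h₁.trace*(h₂^2).trace*(h₂^2).trace + ((-3)/64)*h₁.trace*(h₁*h₂).trace*(h₂^2).trace + ((1)/64)*h₁.trace*(h₁*h₂).trace*(h₁*h₂).trace + ((-3)/128)*h₁.trace*(h₁^2).trace*(h₂^2).trace + ((1)/64)*h₁.trace*(h₁^2).trace*(h₁*h₂).trace + ((1)/256)*h₁.trace*(h₁^2).trace*(h₁^2).trace) + ε^3*(((9)/1024)*(h₂^2).trace*(h₂^2).trace*(h₂^2).trace + ((-9)/512)*(h₁*h₂).trace*(h₂^2).trace*(h₂^2).trace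 + ((3)/256)*(h₁*h₂).trace*(h₁*h₂).trace*(h₂^2).trace + ((-1)/384)*(h₁*h₂).trace*(h₁*h₂).trace*(h₁*h₂).trace + ((-9)/1024)*(h₁^2).trace*(h₂^2).trace*(h₂^2).trace + ((3)/256)*(h₁^2).trace*(h₁*h₂).trace*(h₂^2).trace + ((-1)/256)*(h₁^2).trace*(h₁*h₂).trace*(h₁*h₂).trace + ((3)/1024)*(h₁^2).trace*(h₁^2).trace*(h₂^2).trace + ((-1)/512)*(h₁^2).trace*(h₁^2).trace*(h₁*h₂).trace + ((-1)/3072)*(h₁^2).trace*(h₁^2).trace*(h₁^2).trace))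

lemma QQ_cont : Continuous (QQ h₁ h₂) := by
  unfold QQ
  fun_prop

lemma bigO_B : (fun ε : ℝ =>
    (P1 h₁ h₂ ε^3 - 3*(P1 h₁ h₂ ε)*(P2 h₁ h₂ ε) + 2*(P3 h₁ h₂ ε))/6
      - (4 + 3*ε/2*(h₁-h₂).trace + ε^2/8*(-5*(h₁^2).trace - 2*(h₁*h₂).trace
          + 7*(h₂^2).trace + 2*h₁.trace^2 + 2*h₂.trace^2 - 4*h₁.trace*h₂.trace)))
    =O[nhds 0] (fun ε => ε^3) := by
  have r1 : (h₁ - h₂).trace = h₁.trace - h₂.trace := Matrix.trace_sub h₁ h₂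
  have r2 : (h₂*h₂ - h₂*h₁).trace = (h₂^2).trace - (h₁*h₂).trace := by
    rw [Matrix.trace_sub, Matrix.trace_mul_comm h₂ h₁, pow_two]
  have r3 : ((h₁-h₂)*(h₁-h₂)).trace = (h₁^2).trace - 2*(h₁*h₂).trace + (h₂^2).trace := by
    simp only [sub_mul, mul_sub, Matrix.trace_sub, Matrix.trace_mul_comm h₂ h₁, pow_two]
    ring
  have idq : ∀ ε : ℝ, (P1 h₁ h₂ ε^3 - 3*(P1 h₁ h₂ ε)*(P2 h₁ h₂ ε) + 2*(P3 h₁ h₂ ε))/6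
      - (4 + 3*ε/2*(h₁-h₂).trace + ε^2/8*(-5*(h₁^2).trace - 2*(h₁*h₂).trace
          + 7*(h₂^2).trace + 2*h₁.trace^2 + 2*h₂.trace^2 - 4*h₁.trace*h₂.trace))
      = ε^3 * QQ h₁ h₂ ε := by
    intro ε
    simp only [P1, P2, P3, QQ, r1, r2, r3]
    ring
  have h1 := (isBigO_refl (fun ε : ℝ => ε^3) (nhds 0)).mul
    (((QQ_cont h₁ h₂).tendsto 0).isBigO_one ℝ)
  have h2 := h1.congr_right (fun ε : ℝ => mul_one _)
  exact h2.congr_left fun ε => (idq ε).symm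

lemma main_aux : (fun ε : ℝ =>
    (((XX h₁ h₂ ε).trace^3 - 3*(XX h₁ h₂ ε).trace*(XX h₁ h₂ ε*XX h₁ h₂ ε).trace
      + 2*(XX h₁ h₂ ε*(XX h₁ h₂ ε*XX h₁ h₂ ε)).trace)/6)
    - (4 + 3*ε/2*(h₁-h₂).trace + ε^2/8*(-5*(h₁^2).trace - 2*(h₁*h₂).trace
        + 7*(h₂^2).trace + 2*h₁.trace^2 + 2*h₂.trace^2 - 4*h₁.trace*h₂.trace)))
    =O[nhds 0] (fun ε => ε^3) := by
  have bT1 : (fun ε => (XX h₁ h₂ ε).trace) =O[nhds 0] (fun _ => (1:ℝ)) :=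
    traceO (bigO_X_one h₁ h₂)
  have bT2 : (fun ε => (XX h₁ h₂ ε * XX h₁ h₂ ε).trace) =O[nhds 0] (fun _ => (1:ℝ)) :=
    traceO (((bigO_X_one h₁ h₂).mul (bigO_X_one h₁ h₂)).congr_right
      (fun _ : ℝ => one_mul _))
  have bP1 : (fun ε => P1 h₁ h₂ ε) =O[nhds 0] (fun _ => (1:ℝ)) := by
    have hc : Continuous (P1 h₁ h₂) := by unfold P1; fun_prop
    exact ((hc.tendsto 0).isBigO_one ℝ)
  have hbound : (fun ε => (XX h₁ h₂ ε).trace*(XX h₁ h₂ ε).trace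
      + (XX h₁ h₂ ε).trace*(P1 h₁ h₂ ε) + (P1 h₁ h₂ ε)*(P1 h₁ h₂ ε))
      =O[nhds 0] (fun _ => (1:ℝ)) := by
    have b1 := (bT1.mul bT1).congr_right (fun _ : ℝ => one_mul (1:ℝ))
    have b2 := (bT1.mul bP1).congr_right (fun _ : ℝ => one_mul (1:ℝ))
    have b3 := (bP1.mul bP1).congr_right (fun _ : ℝ => one_mul (1:ℝ))
    exact (b1.add b2).add b3
  have c1 : (fun ε => (XX h₁ h₂ ε).trace^3 - (P1 h₁ h₂ ε)^3) =O[nhds 0] (fun ε => ε^3) := by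
    have h := (bigO_t1 h₁ h₂).mul hbound
    exact h.congr (fun ε => by ring) (fun ε => mul_one _)
  have c2 : (fun ε => (XX h₁ h₂ ε).trace*(XX h₁ h₂ ε * XX h₁ h₂ ε).trace
      - (P1 h₁ h₂ ε)*(P2 h₁ h₂ ε)) =O[nhds 0] (fun ε => ε^3) := by
    have d1 := ((bigO_t1 h₁ h₂).mul bT2).congr_right (fun ε : ℝ => mul_one _)
    have d2 := (bP1.mul (bigO_t2 h₁ h₂)).congr_right (fun ε : ℝ => one_mul _)
    exact (d1.add d2).congr_left fun ε => by ring
  have hA := ((c1.sub (c2.const_mul_left 3)).add ((bigO_t3 h₁ h₂).const_mul_left 2)).const_mul_left (6:ℝ)⁻¹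
  refine (hA.add (bigO_B h₁ h₂)).congr_left fun ε => ?_
  ring

end E3Aux

/-- In dimension 4, for `X = √(g₂⁻¹g₁)` with `g_i = I + ε h_i`, the invariant
`e₃(X) = ((Tr X)³ - 3 Tr X Tr X² + 2 Tr X³)/6` satisfies
`e₃(X) = 4 + (3ε/2)Tr(h₁-h₂) + (ε²/8)[-5 Tr h₁² - 2 Tr(h₁h₂) + 7 Tr h₂²
  + 2(Tr h₁)² + 2(Tr h₂)² - 4 Tr h₁ Tr h₂] + O(ε³)`. -/
theorem e3_expansion (h₁ h₂ : Matrix (Fin 4) (Fin 4) ℝ)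
    (hs₁ : h₁.IsSymm) (hs₂ : h₂.IsSymm) :
    (fun ε : ℝ =>
        (((matSqrt ((1 + ε • h₂)⁻¹ * (1 + ε • h₁))).trace ^ 3
            - 3 * (matSqrt ((1 + ε • h₂)⁻¹ * (1 + ε • h₁))).trace
              * ((matSqrt ((1 + ε • h₂)⁻¹ * (1 + ε • h₁))) ^ 2).trace
            + 2 * ((matSqrt ((1 + ε • h₂)⁻¹ * (1 + ε • h₁))) ^ 3).trace) / 6)
          - (4 + 3 * ε / 2 * (h₁ - h₂).trace
            + ε ^ 2 / 8 * (-5 * (h₁ ^ 2).trace - 2 * (h₁ * h₂).trace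
              + 7 * (h₂ ^ 2).trace + 2 * h₁.trace ^ 2 + 2 * h₂.trace ^ 2
              - 4 * h₁.trace * h₂.trace)))
      =O[nhds 0] fun ε : ℝ => ε ^ 3 := by
  refine (E3Aux.main_aux h₁ h₂).congr_left fun ε => ?_
  simp only [E3Aux.XX, pow_two, pow_three]
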